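/- arXiv:2004.10450 — 4 statements merged into one kernel-verified Lean document; each statement's English description precedes it below -/
import Mathlib

section
/- Fix τ ∈ (0,1). For the distribution p on leaves {(A,1),(A,2),(B,1),(B,2)} with p(A,1)=0.1, p(A,2)=0.4, p(B,1)=0.25, p(B,2)=0.25, there exist no local temperatures t₀, t_A, t_B > 0 such that factorized local temperature sampling — first-step probabilities proportional to (1/2)^{1/t₀} for each branch, then conditional leaf probabilities proportional to the conditional probabilities raised to 1/t_A (resp. 1/t_B) — equals the globally tempered distribution proportional to p(x)^{1/τ}, when τ = 1/2. -/
/-- For the two-step distribution with joint leaf probabilities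
`p(A,1)=0.1, p(A,2)=0.4, p(B,1)=0.25, p(B,2)=0.25` (branch probabilities
`(1/2,1/2)`, conditionals `(0.2,0.8)` under `A` and `(0.5,0.5)` under `B`),
no local temperatures `t₀, t_A, t_B > 0` make factorized local temperature
sampling equal to the globally tempered distribution with `τ = 1/2`
(probabilities proportional to the squared joint probabilities). -/
theorem no_local_temperatures_match_global :
    ¬ ∃ t₀ tA tB : ℝ, 0 < t₀ ∧ 0 < tA ∧ 0 < tB ∧
      -- leaf (A,1)
      ((1 / 2 : ℝ) ^ (1 / t₀) / ((1 / 2 : ℝ) ^ (1 / t₀) + (1 / 2 : ℝ) ^ (1 / t₀))) *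
        ((0.2 : ℝ) ^ (1 / tA) / ((0.2 : ℝ) ^ (1 / tA) + (0.8 : ℝ) ^ (1 / tA)))
        = (0.1 : ℝ) ^ (2 : ℕ) / ((0.1 : ℝ) ^ (2 : ℕ) + (0.4 : ℝ) ^ (2 : ℕ)
            + (0.25 : ℝ) ^ (2 : ℕ) + (0.25 : ℝ) ^ (2 : ℕ)) ∧
      -- leaf (A,2)
      ((1 / 2 : ℝ) ^ (1 / t₀) / ((1 / 2 : ℝ) ^ (1 / t₀) + (1 / 2 : ℝ) ^ (1 / t₀))) *
        ((0.8 : ℝ) ^ (1 / tA) / ((0.2 : ℝ) ^ (1 / tA) + (0.8 : ℝ) ^ (1 / tA)))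
        = (0.4 : ℝ) ^ (2 : ℕ) / ((0.1 : ℝ) ^ (2 : ℕ) + (0.4 : ℝ) ^ (2 : ℕ)
            + (0.25 : ℝ) ^ (2 : ℕ) + (0.25 : ℝ) ^ (2 : ℕ)) ∧
      -- leaf (B,1)
      ((1 / 2 : ℝ) ^ (1 / t₀) / ((1 / 2 : ℝ) ^ (1 / t₀) + (1 / 2 : ℝ) ^ (1 / t₀))) *
        ((0.5 : ℝ) ^ (1 / tB) / ((0.5 : ℝ) ^ (1 / tB) + (0.5 : ℝ) ^ (1 / tB)))
        = (0.25 : ℝ) ^ (2 : ℕ) / ((0.1 : ℝ) ^ (2 : ℕ) + (0.4 : ℝ) ^ (2 : ℕ)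
            + (0.25 : ℝ) ^ (2 : ℕ) + (0.25 : ℝ) ^ (2 : ℕ)) ∧
      -- leaf (B,2)
      ((1 / 2 : ℝ) ^ (1 / t₀) / ((1 / 2 : ℝ) ^ (1 / t₀) + (1 / 2 : ℝ) ^ (1 / t₀))) *
        ((0.5 : ℝ) ^ (1 / tB) / ((0.5 : ℝ) ^ (1 / tB) + (0.5 : ℝ) ^ (1 / tB)))
        = (0.25 : ℝ) ^ (2 : ℕ) / ((0.1 : ℝ) ^ (2 : ℕ) + (0.4 : ℝ) ^ (2 : ℕ)
            + (0.25 : ℝ) ^ (2 : ℕ) + (0.25 : ℝ) ^ (2 : ℕ)) := by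
  rintro ⟨t₀, tA, tB, h0, hA, hB, -, -, h3, -⟩
  have ha : (0:ℝ) < (1 / 2 : ℝ) ^ (1 / t₀) := Real.rpow_pos_of_pos (by norm_num) _
  have hb : (0:ℝ) < (0.5 : ℝ) ^ (1 / tB) := Real.rpow_pos_of_pos (by norm_num) _
  have e1 : (1 / 2 : ℝ) ^ (1 / t₀) / ((1 / 2 : ℝ) ^ (1 / t₀) + (1 / 2 : ℝ) ^ (1 / t₀)) = 1/2 := by
    rw [← two_mul]; field_simp
  have e2 : (0.5 : ℝ) ^ (1 / tB) / ((0.5 : ℝ) ^ (1 / tB) + (0.5 : ℝ) ^ (1 / tB)) = 1/2 := by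
    rw [← two_mul]; field_simp
  rw [e1, e2] at h3
  norm_num at h3
end

section
/- Let P be a probability distribution with full support on a finite set X, and τ ∈ (0,1]. Let Q_τ(x) = P(x)^{1/τ} / Σ_y P(y)^{1/τ}. Among all probability distributions Q on X with Shannon entropy H(Q) = H(Q_τ), the distribution Q_τ minimizes the reverse KL divergence D_KL(Q ‖ P). -/
/-- Gibbs' inequality: cross entropy is at least entropy. -/
lemma gibbs_aux {X : Type*} [Fintype X] (Q R : X → ℝ)
    (hQ0 : ∀ x, 0 ≤ Q x) (hR0 : ∀ x, 0 < R x)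
    (hQsum : ∑ x, Q x = 1) (hRsum : ∑ x, R x = 1) :
    ∑ x, Q x * Real.log (R x) ≤ ∑ x, Q x * Real.log (Q x) := by
  have key : ∀ x : X, Q x - R x ≤ Q x * Real.log (Q x) - Q x * Real.log (R x) := by
    intro x
    rcases eq_or_lt_of_le (hQ0 x) with h | h
    · simp [← h]; exact (hR0 x).le
    · have hlog : Real.log (R x / Q x) ≤ R x / Q x - 1 :=
        Real.log_le_sub_one_of_pos (div_pos (hR0 x) h)
      have hld : Real.log (R x / Q x) = Real.log (R x) - Real.log (Q x) :=
        Real.log_div (hR0 x).ne' h.ne'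
      rw [hld] at hlog
      have := mul_le_mul_of_nonneg_left hlog (hQ0 x)
      have hdiv : Q x * (R x / Q x - 1) = R x - Q x := by field_simp
      rw [hdiv] at this
      nlinarith
  have hsum : ∑ x, (Q x - R x) ≤ ∑ x, (Q x * Real.log (Q x) - Q x * Real.log (R x)) :=
    Finset.sum_le_sum (fun x _ => key x)
  rw [Finset.sum_sub_distrib, Finset.sum_sub_distrib, hQsum, hRsum] at hsum
  linarith

/-- Proposition 1: Among all probability distributions `Q` on a
finite set `X` with Shannon entropy equal to that of the tempered distribution
`Q_τ(x) = P(x)^(1/τ) / ∑ y, P(y)^(1/τ)` (for `P` of full support, `τ ∈ (0,1]`),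
the distribution `Q_τ` minimizes the reverse KL divergence `D_KL(Q ‖ P)`. -/
theorem tempered_minimizes_reverse_kl
    {X : Type*} [Fintype X] [Nonempty X]
    (P : X → ℝ) (hPpos : ∀ x, 0 < P x) (hPsum : ∑ x, P x = 1)
    (τ : ℝ) (hτ0 : 0 < τ) (hτ1 : τ ≤ 1)
    (Qτ : X → ℝ) (hQτ : ∀ x, Qτ x = P x ^ (1 / τ) / ∑ y, P y ^ (1 / τ))
    (Q : X → ℝ) (hQ0 : ∀ x, 0 ≤ Q x) (hQsum : ∑ x, Q x = 1)
    (hH : -∑ x, Q x * Real.log (Q x) = -∑ x, Qτ x * Real.log (Qτ x)) :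
    ∑ x, Qτ x * Real.log (Qτ x / P x) ≤ ∑ x, Q x * Real.log (Q x / P x) := by
  set Z : ℝ := ∑ y, P y ^ (1 / τ) with hZdef
  have hZpos : 0 < Z :=
    Finset.sum_pos (fun x _ => Real.rpow_pos_of_pos (hPpos x) _) Finset.univ_nonempty
  have hQτpos : ∀ x, 0 < Qτ x := fun x => by
    rw [hQτ x]; exact div_pos (Real.rpow_pos_of_pos (hPpos x) _) hZpos
  have hQτsum : ∑ x, Qτ x = 1 := by
    simp only [hQτ]
    rw [← Finset.sum_div, ← hZdef, div_self hZpos.ne']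
  have hlogP : ∀ x, Real.log (P x) = τ * Real.log (Qτ x) + τ * Real.log Z := by
    intro x
    have h1 : Real.log (Qτ x) = (1 / τ) * Real.log (P x) - Real.log Z := by
      rw [hQτ x, Real.log_div (Real.rpow_pos_of_pos (hPpos x) _).ne' hZpos.ne',
        Real.log_rpow (hPpos x)]
    rw [h1]; field_simp; ring
  have expand : ∀ R : X → ℝ, (∀ x, 0 ≤ R x) → ∑ x, R x = 1 →
      ∑ x, R x * Real.log (R x / P x)
        = ∑ x, R x * Real.log (R x) - τ * ∑ x, R x * Real.log (Qτ x) - τ * Real.log Z := by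
    intro R hR0 hRsum
    have step1 : ∑ x, R x * Real.log (R x / P x)
        = ∑ x, (R x * Real.log (R x) - R x * Real.log (P x)) := by
      apply Finset.sum_congr rfl
      intro x _
      rcases eq_or_lt_of_le (hR0 x) with h | h
      · simp [← h]
      · rw [Real.log_div h.ne' (hPpos x).ne']; ring
    have step2 : ∑ x, R x * Real.log (P x)
        = τ * ∑ x, R x * Real.log (Qτ x) + τ * Real.log Z := by
      calc ∑ x, R x * Real.log (P x)
          = ∑ x, (τ * (R x * Real.log (Qτ x)) + R x * (τ * Real.log Z)) := by
            apply Finset.sum_congr rfl; intro x _; rw [hlogP x]; ring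
        _ = τ * ∑ x, R x * Real.log (Qτ x) + (∑ x, R x) * (τ * Real.log Z) := by
            rw [Finset.sum_add_distrib, Finset.mul_sum, Finset.sum_mul]
        _ = τ * ∑ x, R x * Real.log (Qτ x) + τ * Real.log Z := by rw [hRsum]; ring
    rw [step1, Finset.sum_sub_distrib, step2]; ring
  have hH' : ∑ x, Q x * Real.log (Q x) = ∑ x, Qτ x * Real.log (Qτ x) := by linarith
  have hgibbs : ∑ x, Q x * Real.log (Qτ x) ≤ ∑ x, Q x * Real.log (Q x) :=
    gibbs_aux Q Qτ hQ0 hQτpos hQsum hQτsum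
  rw [expand Qτ (fun x => (hQτpos x).le) hQτsum, expand Q hQ0 hQsum, hH']
  nlinarith [hgibbs, hH']
end

section
/- Let P be a probability distribution with full support on a finite set X, and let Q_τ(x) ∝ P(x)^{1/τ} for τ > 0. Then the map τ ↦ H(Q_τ) is monotone: for 0 < τ₁ ≤ τ₂, H(Q_{τ₁}) ≤ H(Q_{τ₂}) whenever τ₂ ≤ 1 (entropy is nondecreasing in temperature on (0,1]). -/
/-- Gibbs' inequality: cross-entropy dominates entropy. -/
lemma gibbs_aux_s7 {X : Type*} [Fintype X] (q r : X → ℝ)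
    (hq : ∀ x, 0 < q x) (hr : ∀ x, 0 < r x)
    (hqs : ∑ x, q x = 1) (hrs : ∑ x, r x = 1) :
    ∑ x, q x * (Real.log (r x) - Real.log (q x)) ≤ 0 := by
  have h : ∀ x : X, q x * (Real.log (r x) - Real.log (q x)) ≤ r x - q x := by
    intro x
    rw [← Real.log_div (hr x).ne' (hq x).ne']
    have hlog := Real.log_le_sub_one_of_pos (div_pos (hr x) (hq x))
    have := mul_le_mul_of_nonneg_left hlog (hq x).le
    calc q x * Real.log (r x / q x) ≤ q x * (r x / q x - 1) := this
      _ = r x - q x := by rw [mul_sub, mul_div_cancel₀ _ (hq x).ne', mul_one]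
  calc ∑ x, q x * (Real.log (r x) - Real.log (q x)) ≤ ∑ x, (r x - q x) :=
        Finset.sum_le_sum fun x _ => h x
    _ = 0 := by rw [Finset.sum_sub_distrib, hqs, hrs, sub_self]

/-- The Shannon entropy of the tempered distribution
`Q_τ(x) ∝ P(x)^(1/τ)` is nondecreasing in the temperature on `(0,1]`:
for `0 < τ₁ ≤ τ₂ ≤ 1`, `H(Q_{τ₁}) ≤ H(Q_{τ₂})`. -/
theorem tempered_entropy_monotone
    {X : Type*} [Fintype X] [Nonempty X]
    (P : X → ℝ) (hPpos : ∀ x, 0 < P x) (hPsum : ∑ x, P x = 1)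
    (Q : ℝ → X → ℝ)
    (hQ : ∀ τ x, Q τ x = P x ^ (1 / τ) / ∑ y, P y ^ (1 / τ))
    (τ₁ τ₂ : ℝ) (h1 : 0 < τ₁) (h12 : τ₁ ≤ τ₂) (h2 : τ₂ ≤ 1) :
    -∑ x, Q τ₁ x * Real.log (Q τ₁ x) ≤ -∑ x, Q τ₂ x * Real.log (Q τ₂ x) := by
  have hτ2 : 0 < τ₂ := lt_of_lt_of_le h1 h12
  rcases eq_or_lt_of_le h12 with heq | hlt
  · subst heq; exact le_refl _
  set a := 1 / τ₁ with ha_def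
  set b := 1 / τ₂ with hb_def
  have hb : 0 < b := by positivity
  have hba : b < a := by
    apply one_div_lt_one_div_of_lt h1 hlt
  set Za := ∑ y, P y ^ a with hZa_def
  set Zb := ∑ y, P y ^ b with hZb_def
  have hZa : 0 < Za :=
    Finset.sum_pos (fun y _ => Real.rpow_pos_of_pos (hPpos y) a) Finset.univ_nonempty
  have hZb : 0 < Zb :=
    Finset.sum_pos (fun y _ => Real.rpow_pos_of_pos (hPpos y) b) Finset.univ_nonempty
  have hqx : ∀ x, Q τ₁ x = P x ^ a / Za := fun x => hQ τ₁ x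
  have hrx : ∀ x, Q τ₂ x = P x ^ b / Zb := fun x => hQ τ₂ x
  have hqpos : ∀ x, 0 < Q τ₁ x := fun x => by
    rw [hqx]; exact div_pos (Real.rpow_pos_of_pos (hPpos x) a) hZa
  have hrpos : ∀ x, 0 < Q τ₂ x := fun x => by
    rw [hrx]; exact div_pos (Real.rpow_pos_of_pos (hPpos x) b) hZb
  have hqsum : ∑ x, Q τ₁ x = 1 := by
    simp only [hqx]; rw [← Finset.sum_div, ← hZa_def, div_self hZa.ne']
  have hrsum : ∑ x, Q τ₂ x = 1 := by
    simp only [hrx]; rw [← Finset.sum_div, ← hZb_def, div_self hZb.ne']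
  have hlogq : ∀ x, Real.log (Q τ₁ x) = a * Real.log (P x) - Real.log Za := fun x => by
    rw [hqx, Real.log_div (Real.rpow_pos_of_pos (hPpos x) a).ne' hZa.ne',
      Real.log_rpow (hPpos x)]
  have hlogr : ∀ x, Real.log (Q τ₂ x) = b * Real.log (P x) - Real.log Zb := fun x => by
    rw [hrx, Real.log_div (Real.rpow_pos_of_pos (hPpos x) b).ne' hZb.ne',
      Real.log_rpow (hPpos x)]
  set Ea := ∑ x, Q τ₁ x * Real.log (P x) with hEa_def
  set Eb := ∑ x, Q τ₂ x * Real.log (P x) with hEb_def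
  have hHq : ∑ x, Q τ₁ x * Real.log (Q τ₁ x) = a * Ea - Real.log Za := by
    calc ∑ x, Q τ₁ x * Real.log (Q τ₁ x)
        = ∑ x, (a * (Q τ₁ x * Real.log (P x)) - Real.log Za * Q τ₁ x) := by
          refine Finset.sum_congr rfl fun x _ => ?_; rw [hlogq x]; ring
      _ = a * Ea - Real.log Za := by
          rw [Finset.sum_sub_distrib, ← Finset.mul_sum, ← Finset.mul_sum, hqsum, mul_one]
  have hHr : ∑ x, Q τ₂ x * Real.log (Q τ₂ x) = b * Eb - Real.log Zb := by
    calc ∑ x, Q τ₂ x * Real.log (Q τ₂ x)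
        = ∑ x, (b * (Q τ₂ x * Real.log (P x)) - Real.log Zb * Q τ₂ x) := by
          refine Finset.sum_congr rfl fun x _ => ?_; rw [hlogr x]; ring
      _ = b * Eb - Real.log Zb := by
          rw [Finset.sum_sub_distrib, ← Finset.mul_sum, ← Finset.mul_sum, hrsum, mul_one]
  have G1 : (b - a) * Ea + (Real.log Za - Real.log Zb) ≤ 0 := by
    have := gibbs_aux_s7 (Q τ₁) (Q τ₂) hqpos hrpos hqsum hrsum
    calc (b - a) * Ea + (Real.log Za - Real.log Zb)
        = ∑ x, Q τ₁ x * (Real.log (Q τ₂ x) - Real.log (Q τ₁ x)) := by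
          rw [show ∑ x, Q τ₁ x * (Real.log (Q τ₂ x) - Real.log (Q τ₁ x))
              = ∑ x, ((b - a) * (Q τ₁ x * Real.log (P x))
                + (Real.log Za - Real.log Zb) * Q τ₁ x) from
            Finset.sum_congr rfl fun x _ => by rw [hlogq x, hlogr x]; ring]
          rw [Finset.sum_add_distrib, ← Finset.mul_sum, ← Finset.mul_sum, hqsum, mul_one]
      _ ≤ 0 := this
  have G2 : (a - b) * Eb + (Real.log Zb - Real.log Za) ≤ 0 := by
    have := gibbs_aux_s7 (Q τ₂) (Q τ₁) hrpos hqpos hrsum hqsum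
    calc (a - b) * Eb + (Real.log Zb - Real.log Za)
        = ∑ x, Q τ₂ x * (Real.log (Q τ₁ x) - Real.log (Q τ₂ x)) := by
          rw [show ∑ x, Q τ₂ x * (Real.log (Q τ₁ x) - Real.log (Q τ₂ x))
              = ∑ x, ((a - b) * (Q τ₂ x * Real.log (P x))
                + (Real.log Zb - Real.log Za) * Q τ₂ x) from
            Finset.sum_congr rfl fun x _ => by rw [hlogq x, hlogr x]; ring]
          rw [Finset.sum_add_distrib, ← Finset.mul_sum, ← Finset.mul_sum, hrsum, mul_one]
      _ ≤ 0 := this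
  rw [hHq, hHr]
  have hab : 0 < a - b := by linarith
  nlinarith [mul_pos hab hb, mul_le_mul_of_nonneg_left G1 hb.le,
    mul_le_mul_of_nonneg_left G2 hb.le,
    mul_le_mul_of_nonneg_left G1 hab.le, mul_le_mul_of_nonneg_left G2 hab.le]
end

section
/- The entropy of the tempered distribution never exceeds that of the original when τ ≤ 1: for P with full support on finite X and Q_τ(x) ∝ P(x)^{1/τ} with τ ∈ (0,1], H(Q_τ) ≤ H(P). -/
/-- Gibbs' inequality. -/
lemma gibbs_ineq {X : Type*} [Fintype X] (p q : X → ℝ)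
    (hp : ∀ x, 0 < p x) (hq : ∀ x, 0 < q x)
    (hps : ∑ x, p x = 1) (hqs : ∑ x, q x = 1) :
    ∑ x, p x * Real.log (q x) ≤ ∑ x, p x * Real.log (p x) := by
  have key : ∀ x : X, p x * Real.log (q x) - p x * Real.log (p x) ≤ q x - p x := by
    intro x
    have h1 : Real.log (q x / p x) ≤ q x / p x - 1 :=
      Real.log_le_sub_one_of_pos (div_pos (hq x) (hp x))
    have h2 : Real.log (q x / p x) = Real.log (q x) - Real.log (p x) :=
      Real.log_div (hq x).ne' (hp x).ne'
    have h3 := mul_le_mul_of_nonneg_left h1 (hp x).le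
    rw [h2] at h3
    have h4 : p x * (q x / p x - 1) = q x - p x := by
      rw [mul_sub, mul_div_cancel₀ _ (hp x).ne', mul_one]
    linarith [h4 ▸ h3]
  have hsum : ∑ x, (p x * Real.log (q x) - p x * Real.log (p x)) ≤ ∑ x, (q x - p x) :=
    Finset.sum_le_sum fun x _ => key x
  rw [Finset.sum_sub_distrib, Finset.sum_sub_distrib, hps, hqs] at hsum
  linarith

/-- The entropy of the tempered distribution `Q_τ(x) ∝ P(x)^(1/τ)`
never exceeds that of the original distribution when `τ ∈ (0,1]`. -/
theorem tempered_entropy_le_entropy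
    {X : Type*} [Fintype X] [Nonempty X]
    (P : X → ℝ) (hPpos : ∀ x, 0 < P x) (hPsum : ∑ x, P x = 1)
    (τ : ℝ) (hτ0 : 0 < τ) (hτ1 : τ ≤ 1)
    (Qτ : X → ℝ) (hQτ : ∀ x, Qτ x = P x ^ (1 / τ) / ∑ y, P y ^ (1 / τ)) :
    -∑ x, Qτ x * Real.log (Qτ x) ≤ -∑ x, P x * Real.log (P x) := by
  set β : ℝ := 1 / τ with hβdef
  have hβ : 1 ≤ β := by
    rw [hβdef]
    rw [le_div_iff₀ hτ0]; linarith
  set Z : ℝ := ∑ y, P y ^ β with hZdef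
  have hZpos : 0 < Z := by
    apply Finset.sum_pos (fun y _ => Real.rpow_pos_of_pos (hPpos y) β) Finset.univ_nonempty
  have hQpos : ∀ x, 0 < Qτ x := fun x => by
    rw [hQτ x]; exact div_pos (Real.rpow_pos_of_pos (hPpos x) β) hZpos
  have hQsum : ∑ x, Qτ x = 1 := by
    simp only [hQτ]
    rw [← Finset.sum_div, ← hZdef, div_self hZpos.ne']
  have hlogQ : ∀ x, Real.log (Qτ x) = β * Real.log (P x) - Real.log Z := by
    intro x
    rw [hQτ x, Real.log_div (Real.rpow_pos_of_pos (hPpos x) β).ne' hZpos.ne',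
      Real.log_rpow (hPpos x)]
  rcases eq_or_lt_of_le hβ with hβ1 | hβ1
  · -- β = 1, so Qτ = P
    have hZ1 : Z = 1 := by
      rw [hZdef, ← hβ1]; simpa using hPsum
    have : ∀ x, Qτ x = P x := by
      intro x
      rw [hQτ x, hZ1, ← hβ1, Real.rpow_one, div_one]
    simp only [this]
    exact le_rfl
  · -- β > 1
    have g1 : ∑ x, Qτ x * Real.log (P x) ≤ ∑ x, Qτ x * Real.log (Qτ x) :=
      gibbs_ineq Qτ P hQpos hPpos hQsum hPsum
    have g2 : ∑ x, P x * Real.log (Qτ x) ≤ ∑ x, P x * Real.log (P x) :=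
      gibbs_ineq P Qτ hPpos hQpos hPsum hQsum
    -- expand log Qτ in g2
    have e2 : ∑ x, P x * Real.log (Qτ x)
        = β * (∑ x, P x * Real.log (P x)) - Real.log Z := by
      have : ∀ x : X, P x * Real.log (Qτ x)
          = β * (P x * Real.log (P x)) - P x * Real.log Z := fun x => by
        rw [hlogQ x]; ring
      rw [Finset.sum_congr rfl fun x _ => this x, Finset.sum_sub_distrib,
        ← Finset.mul_sum, ← Finset.sum_mul, hPsum, one_mul]
    have e1 : ∑ x, Qτ x * Real.log (Qτ x)
        = β * (∑ x, Qτ x * Real.log (P x)) - Real.log Z := by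
      have : ∀ x : X, Qτ x * Real.log (Qτ x)
          = β * (Qτ x * Real.log (P x)) - Qτ x * Real.log Z := fun x => by
        rw [hlogQ x]; ring
      rw [Finset.sum_congr rfl fun x _ => this x, Finset.sum_sub_distrib,
        ← Finset.mul_sum, ← Finset.sum_mul, hQsum, one_mul]
    -- From g2: log Z ≥ (β-1) * ∑ P log P
    -- From g1 and e1: (β-1) * ∑ Qτ log P ≥ log Z
    have hA : (β - 1) * (∑ x, P x * Real.log (P x)) ≤ Real.log Z := by
      rw [e2] at g2; linarith
    have hB : Real.log Z ≤ (β - 1) * (∑ x, Qτ x * Real.log (P x)) := by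
      rw [e1] at g1; linarith
    have hC : ∑ x, P x * Real.log (P x) ≤ ∑ x, Qτ x * Real.log (P x) := by
      have := hA.trans hB
      have hβ1' : 0 < β - 1 := by linarith
      exact le_of_mul_le_mul_left (by linarith) hβ1'
    linarith [hC.trans g1]
end
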